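/- Suppose that every nonzero element of the inner additive code C₀ has Hamming weight at least d_r; suppose that for every level j ∈ {1,…,r−1}, every pair of index tuples i, i′ ∈ I = I₁ × ⋯ × I_{r−1} that agree in coordinates 1,…,j−1 and differ in coordinate j, and all c, c′ ∈ C₀, the Hamming distance between c + t_i and c′ + t_{i′} is at least d_j; and suppose each outer code A_j ⊆ I_j^N has minimum Hamming distance at least δ_j. Then the generalized concatenated code C_gc has minimum distance at least min{δ₁d₁, δ₂d₂, …, δ_{r−1}d_{r−1}, d_r}: any two distinct codewords of C_gc are at total Hamming distance at least this minimum. -/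

import Mathlib

/-- **Generalized concatenated code: minimum distance.**
Setup: `F` is a finite additive abelian group, `C₀ ≤ F^n` the inner additive code,
`ι j` (for `j : Fin R`, `R = r - 1`) the index sets, `t` the coset-representative map,
`A j ⊆ (ι j)^N` the outer codes, `d j` the level distances (`d_1, …, d_{r-1}`),
`dr = d_r` the inner-code distance, `δ j` the outer distances.
Any two distinct codewords of the generalized concatenated code are at total Hamming
distance at least `min {δ₁d₁, …, δ_{r-1}d_{r-1}, d_r}` (the minimum is formed in `ℕ∞`
so that it is also meaningful for `R = 0`). -/
theorem gc_code_min_distance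
    {F : Type} [AddCommGroup F] [Fintype F] [DecidableEq F]
    {n N R : ℕ}
    (ι : Fin R → Type) [∀ j, Fintype (ι j)] [∀ j, DecidableEq (ι j)]
    (C₀ : AddSubgroup (Fin n → F))
    (t : (∀ j, ι j) → (Fin n → F))
    (A : ∀ j, Set (Fin N → ι j))
    (d : Fin R → ℕ) (dr : ℕ) (δ : Fin R → ℕ)
    (hinner : ∀ c ∈ C₀, c ≠ 0 → dr ≤ hammingNorm c)
    (hlevel : ∀ j : Fin R, ∀ i i' : ∀ j', ι j',
        (∀ j' : Fin R, j' < j → i j' = i' j') → i j ≠ i' j →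
        ∀ c c' : Fin n → F, c ∈ C₀ → c' ∈ C₀ →
          d j ≤ hammingDist (c + t i) (c' + t i'))
    (houter : ∀ j : Fin R, ∀ a ∈ A j, ∀ a' ∈ A j, a ≠ a' → δ j ≤ hammingDist a a')
    (x y : Fin N → Fin n → F)
    (hx : ∃ (c : Fin N → Fin n → F) (a : Fin N → ∀ j, ι j),
        (∀ ν, c ν ∈ C₀) ∧ (∀ j, (fun ν => a ν j) ∈ A j) ∧ x = fun ν => c ν + t (a ν))
    (hy : ∃ (c : Fin N → Fin n → F) (a : Fin N → ∀ j, ι j),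
        (∀ ν, c ν ∈ C₀) ∧ (∀ j, (fun ν => a ν j) ∈ A j) ∧ y = fun ν => c ν + t (a ν))
    (hxy : x ≠ y) :
    min (dr : ℕ∞) (Finset.univ.inf fun j => ((δ j * d j : ℕ) : ℕ∞))
      ≤ ((∑ ν, hammingDist (x ν) (y ν) : ℕ) : ℕ∞) := by

  classical
  obtain ⟨c, a, hc, ha, rfl⟩ := hx
  obtain ⟨c', a', hc', ha', rfl⟩ := hy
  by_cases hcase : ∀ ν j, a ν j = a' ν j
  · -- inner case: indices agree, difference lies in C₀
    have hax : ∀ ν, a ν = a' ν := fun ν => funext (hcase ν)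
    obtain ⟨ν, hν⟩ : ∃ ν, c ν + t (a ν) ≠ c' ν + t (a' ν) := by
      by_contra h
      push_neg at h
      exact hxy (funext h)
    have hdiff : (c ν + t (a ν)) - (c' ν + t (a' ν)) ∈ C₀ := by
      have : (c ν + t (a ν)) - (c' ν + t (a' ν)) = c ν - c' ν := by
        rw [hax ν]; abel
      rw [this]
      exact sub_mem (hc ν) (hc' ν)
    have hne : (c ν + t (a ν)) - (c' ν + t (a' ν)) ≠ 0 :=
      sub_ne_zero.mpr hν
    have h1 : dr ≤ hammingDist (c ν + t (a ν)) (c' ν + t (a' ν)) := by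
      rw [hammingDist_comm, hammingDist_eq_hammingNorm, neg_add_eq_sub]
      exact hinner _ hdiff hne
    have h2 : dr ≤ ∑ ν', hammingDist (c ν' + t (a ν')) (c' ν' + t (a' ν')) :=
      h1.trans (Finset.single_le_sum (f := fun ν' => hammingDist (c ν' + t (a ν')) (c' ν' + t (a' ν'))) (fun _ _ => Nat.zero_le _) (Finset.mem_univ ν))
    exact le_trans (min_le_left _ _) (by exact_mod_cast h2)
  · push_neg at hcase
    obtain ⟨ν₀, j₀, hj₀⟩ := hcase
    set s : Finset (Fin R) := Finset.univ.filter (fun j => ∃ ν, a ν j ≠ a' ν j) with hs_def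
    have hs : s.Nonempty := ⟨j₀, by simp only [hs_def, Finset.mem_filter, Finset.mem_univ, true_and]; exact ⟨ν₀, hj₀⟩⟩
    set j := s.min' hs with hj_def
    have hjs : j ∈ s := s.min'_mem hs
    have hlt : ∀ j' : Fin R, j' < j → ∀ ν, a ν j' = a' ν j' := by
      intro j' hj' ν
      by_contra h
      have hmem : j' ∈ s := by
        simp only [hs_def, Finset.mem_filter, Finset.mem_univ, true_and]
        exact ⟨ν, h⟩
      exact absurd (s.min'_le _ hmem) (not_le.mpr hj')
    have hcol : (fun ν => a ν j) ≠ (fun ν => a' ν j) := by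
      obtain ⟨ν, hν⟩ := (Finset.mem_filter.mp hjs).2
      intro h; exact hν (congrFun h ν)
    have houterj : δ j ≤ hammingDist (fun ν => a ν j) (fun ν => a' ν j) :=
      houter j _ (ha j) _ (ha' j) hcol
    set S : Finset (Fin N) := Finset.univ.filter (fun ν => a ν j ≠ a' ν j) with hS_def
    have hScard : δ j ≤ S.card := houterj
    have hblock : ∀ ν ∈ S, d j ≤ hammingDist (c ν + t (a ν)) (c' ν + t (a' ν)) := by
      intro ν hν
      simp only [hS_def, Finset.mem_filter, Finset.mem_univ, true_and] at hν
      exact hlevel j (a ν) (a' ν) (fun j' h => hlt j' h ν) hν _ _ (hc ν) (hc' ν)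
    have hsum : δ j * d j ≤ ∑ ν, hammingDist (c ν + t (a ν)) (c' ν + t (a' ν)) := by
      calc δ j * d j ≤ S.card * d j := Nat.mul_le_mul_right _ hScard
        _ = ∑ _ν ∈ S, d j := by rw [Finset.sum_const, smul_eq_mul]
        _ ≤ ∑ ν ∈ S, hammingDist (c ν + t (a ν)) (c' ν + t (a' ν)) :=
            Finset.sum_le_sum hblock
        _ ≤ ∑ ν, hammingDist (c ν + t (a ν)) (c' ν + t (a' ν)) :=
            Finset.sum_le_sum_of_subset (Finset.filter_subset _ _)
    refine le_trans (min_le_right _ _) (le_trans (Finset.inf_le (Finset.mem_univ j)) ?_)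
    exact_mod_cast hsum
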